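/- Let Ψ be the seminorm Ψ(v) = |∫_Ω div v dx| + |∫_Ω curl v dx| + |∫_Ω curl(curl v) dx| defined for smooth vector fields v on a bounded open set Ω ⊂ ℝ³, and suppose m(x) = 2(a·x)x − |x|²a + ρx + Qx + b is a conformal Killing field with Ψ(m) = 0. Then m is a constant vector field (a = 0, ρ = 0, Q = 0). Conversely, if m is constant then Ψ(m) = 0. -/

import Mathlib

open MeasureTheory Real Filter Matrix

noncomputable def pd (i : Fin 3) (f : (Fin 3 → ℝ) → ℝ) (x : Fin 3 → ℝ) : ℝ :=
  fderiv ℝ f x (Pi.single i 1)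

def dot3 (a x : Fin 3 → ℝ) : ℝ := ∑ i, a i * x i

noncomputable def divg (w : (Fin 3 → ℝ) → Fin 3 → ℝ) (x : Fin 3 → ℝ) : ℝ :=
  ∑ i, pd i (fun y => w y i) x

noncomputable def curl3 (w : (Fin 3 → ℝ) → Fin 3 → ℝ) (x : Fin 3 → ℝ) : Fin 3 → ℝ :=
  ![pd 1 (fun y => w y 2) x - pd 2 (fun y => w y 1) x,
    pd 2 (fun y => w y 0) x - pd 0 (fun y => w y 2) x,
    pd 0 (fun y => w y 1) x - pd 1 (fun y => w y 0) x]

noncomputable def tfsym (u : (Fin 3 → ℝ) → Fin 3 → ℝ) (x : Fin 3 → ℝ) (i j : Fin 3) : ℝ :=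
  (pd i (fun y => u y j) x + pd j (fun y => u y i) x) / 2
    - (1 / 3) * divg u x * (if i = j then 1 else 0)

/-- The conformal Killing field `x ↦ 2(a·x)x − |x|²a + ρx + Qx + b`. -/
def ckField (a b : Fin 3 → ℝ) (ρ : ℝ) (Q : Matrix (Fin 3) (Fin 3) ℝ) :
    (Fin 3 → ℝ) → Fin 3 → ℝ :=
  fun x j => 2 * dot3 a x * x j - dot3 x x * a j + ρ * x j + Q.mulVec x j + b j

/-- The seminorm Ψ(v) = |∫ div v| + |∫ curl v| + |∫ curl curl v| over Ω. -/
noncomputable def PsiSemi (Ω : Set (Fin 3 → ℝ))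
    (v : (Fin 3 → ℝ) → Fin 3 → ℝ) : ℝ :=
  |∫ x in Ω, divg v x| +
    Real.sqrt (∑ i, (∫ x in Ω, curl3 v x i) ^ 2) +
    Real.sqrt (∑ i, (∫ x in Ω, curl3 (curl3 v) x i) ^ 2)

noncomputable def P (i : Fin 3) : (Fin 3 → ℝ) →L[ℝ] ℝ := ContinuousLinearMap.proj i

lemma pd_ck (a b : Fin 3 → ℝ) (ρ : ℝ) (Q : Matrix (Fin 3) (Fin 3) ℝ) (i j : Fin 3)
    (x : Fin 3 → ℝ) :
    pd i (fun y => ckField a b ρ Q y j) x =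
      2 * a i * x j + 2 * dot3 a x * (if i = j then 1 else 0)
        - 2 * x i * a j + ρ * (if i = j then 1 else 0) + Q j i := by
  have h1 : HasFDerivAt (fun y : Fin 3 → ℝ => dot3 a y) (∑ k, a k • P k) x := by
    unfold dot3
    exact HasFDerivAt.fun_sum fun k _ => ((P k).hasFDerivAt.const_mul (a k))
  have h2 : HasFDerivAt (fun y : Fin 3 → ℝ => dot3 y y)
      (∑ k, ((x k • P k : (Fin 3 → ℝ) →L[ℝ] ℝ) + x k • P k)) x := by
    unfold dot3
    exact HasFDerivAt.fun_sum fun k _ => ((P k).hasFDerivAt.mul (P k).hasFDerivAt)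
  have h3 : HasFDerivAt (fun y : Fin 3 → ℝ => 2 * dot3 a y * y j)
      ((2 * dot3 a x) • P j + x j • (2 : ℝ) • ∑ k, a k • P k) x :=
    (h1.const_mul 2).mul (P j).hasFDerivAt
  have h4 : HasFDerivAt (fun y : Fin 3 → ℝ => dot3 y y * a j)
      (a j • ∑ k, ((x k • P k : (Fin 3 → ℝ) →L[ℝ] ℝ) + x k • P k)) x := h2.mul_const (a j)
  have h5 : HasFDerivAt (fun y : Fin 3 → ℝ => ρ * y j) (ρ • P j) x :=
    (P j).hasFDerivAt.const_mul ρ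
  have h6 : HasFDerivAt (fun y : Fin 3 → ℝ => ∑ k, Q j k * y k) (∑ k, Q j k • P k) x :=
    HasFDerivAt.fun_sum fun k _ => ((P k).hasFDerivAt.const_mul (Q j k))
  have H := (((h3.fun_sub h4).fun_add h5).fun_add h6).add_const (b j)
  have hfun : (fun y => ckField a b ρ Q y j)
      = (fun y => 2 * dot3 a y * y j - dot3 y y * a j + ρ * y j + (∑ k, Q j k * y k) + b j) := by
    funext y; simp [ckField, Matrix.mulVec, dotProduct]
  rw [pd, hfun, H.fderiv]
  simp only [ContinuousLinearMap.add_apply, ContinuousLinearMap.sub_apply,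
    ContinuousLinearMap.smul_apply, ContinuousLinearMap.sum_apply, P,
    ContinuousLinearMap.proj_apply, smul_eq_mul, Pi.single_apply, Fin.sum_univ_three]
  fin_cases i <;> fin_cases j <;> simp <;> ring

lemma pd_affine (α β γ : ℝ) (s t i : Fin 3) (x : Fin 3 → ℝ) :
    pd i (fun y => α * y s - β * y t + γ) x
      = α * (if s = i then 1 else 0) - β * (if t = i then 1 else 0) := by
  have H : HasFDerivAt (fun y : Fin 3 → ℝ => α * y s - β * y t + γ)
      (α • P s - β • P t) x :=
    (((P s).hasFDerivAt.const_mul α).sub ((P t).hasFDerivAt.const_mul β)).add_const γ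
  rw [pd, H.fderiv]
  simp [P, Pi.single_apply]

lemma divg_ck (a b : Fin 3 → ℝ) (ρ : ℝ) (Q : Matrix (Fin 3) (Fin 3) ℝ)
    (hd : ∀ k, Q k k = 0) (x : Fin 3 → ℝ) :
    divg (ckField a b ρ Q) x = 6 * dot3 a x + 3 * ρ := by
  simp only [divg, pd_ck, Fin.sum_univ_three]
  simp [hd 0, hd 1, hd 2, dot3, Fin.sum_univ_three]
  ring

lemma curl3_ck (a b : Fin 3 → ℝ) (ρ : ℝ) (Q : Matrix (Fin 3) (Fin 3) ℝ) (x : Fin 3 → ℝ) :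
    curl3 (ckField a b ρ Q) x
      = ![4 * (a 1 * x 2 - a 2 * x 1) + (Q 2 1 - Q 1 2),
          4 * (a 2 * x 0 - a 0 * x 2) + (Q 0 2 - Q 2 0),
          4 * (a 0 * x 1 - a 1 * x 0) + (Q 1 0 - Q 0 1)] := by
  funext i
  fin_cases i <;> simp [curl3, pd_ck] <;> ring

lemma curlcurl_ck (a b : Fin 3 → ℝ) (ρ : ℝ) (Q : Matrix (Fin 3) (Fin 3) ℝ) (x : Fin 3 → ℝ)
    (i : Fin 3) :
    curl3 (curl3 (ckField a b ρ Q)) x i = 8 * a i := by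
  have hw : curl3 (ckField a b ρ Q)
      = (fun y : Fin 3 → ℝ =>
          ![(4 * a 1) * y 2 - (4 * a 2) * y 1 + (Q 2 1 - Q 1 2),
            (4 * a 2) * y 0 - (4 * a 0) * y 2 + (Q 0 2 - Q 2 0),
            (4 * a 0) * y 1 - (4 * a 1) * y 0 + (Q 1 0 - Q 0 1)]) := by
    funext y k
    rw [curl3_ck]
    fin_cases k <;> simp <;> ring
  rw [hw]
  fin_cases i <;>
    simp only [curl3, Matrix.cons_val_zero, Matrix.cons_val_one,
      Matrix.head_cons, Matrix.cons_val_two, Matrix.tail_cons, pd_affine] <;>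
    norm_num [Fin.ext_iff] <;> ring_nf <;> rfl

theorem stmt18 (Ω : Set (Fin 3 → ℝ)) (hΩo : IsOpen Ω)
    (hΩb : Bornology.IsBounded Ω) (hΩpos : 0 < MeasureTheory.volume Ω)
    (a b : Fin 3 → ℝ) (ρ : ℝ) (Q : Matrix (Fin 3) (Fin 3) ℝ) (hQ : Qᵀ = -Q) :
    (PsiSemi Ω (ckField a b ρ Q) = 0 →
      a = 0 ∧ ρ = 0 ∧ Q = 0 ∧ ∀ x, ckField a b ρ Q x = b)
    ∧ ((a = 0 ∧ ρ = 0 ∧ Q = 0) → PsiSemi Ω (ckField a b ρ Q) = 0) := by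
  have hskew : ∀ i j, Q j i = - Q i j := by
    intro i j
    have := congrFun (congrFun hQ i) j
    simpa [Matrix.transpose_apply, Matrix.neg_apply] using this
  have hd : ∀ k, Q k k = 0 := by
    intro k; have := hskew k k; linarith
  set V := (volume Ω).toReal with hVdef
  have hV : 0 < V := ENNReal.toReal_pos hΩpos.ne' (hΩb.measure_lt_top).ne
  constructor
  · intro h
    unfold PsiSemi at h
    have hA0 := abs_nonneg (∫ x in Ω, divg (ckField a b ρ Q) x)
    have hB0 := Real.sqrt_nonneg (∑ i, (∫ x in Ω, curl3 (ckField a b ρ Q) x i) ^ 2)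
    have hC0 := Real.sqrt_nonneg
      (∑ i, (∫ x in Ω, curl3 (curl3 (ckField a b ρ Q)) x i) ^ 2)
    have hA : |∫ x in Ω, divg (ckField a b ρ Q) x| = 0 := by linarith
    have hB : Real.sqrt (∑ i, (∫ x in Ω, curl3 (ckField a b ρ Q) x i) ^ 2) = 0 := by linarith
    have hC : Real.sqrt
        (∑ i, (∫ x in Ω, curl3 (curl3 (ckField a b ρ Q)) x i) ^ 2) = 0 := by linarith
    -- from hC : a = 0
    have hI3 : ∀ i, (∫ x in Ω, curl3 (curl3 (ckField a b ρ Q)) x i) = V * (8 * a i) := by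
      intro i
      simp only [curlcurl_ck]
      rw [setIntegral_const, smul_eq_mul]
      rfl
    have hsum3 : (∑ i, (∫ x in Ω, curl3 (curl3 (ckField a b ρ Q)) x i) ^ 2) = 0 := by
      have hle := Real.sqrt_eq_zero'.mp hC
      have hge : (0:ℝ) ≤ ∑ i, (∫ x in Ω, curl3 (curl3 (ckField a b ρ Q)) x i) ^ 2 :=
        Finset.sum_nonneg fun _ _ => sq_nonneg _
      linarith
    have ha : a = 0 := by
      funext i
      have := (Finset.sum_eq_zero_iff_of_nonneg
        (fun j _ => sq_nonneg (∫ x in Ω, curl3 (curl3 (ckField a b ρ Q)) x j))).mp hsum3 i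
        (Finset.mem_univ i)
      rw [hI3 i] at this
      have h8 : V * (8 * a i) = 0 := by
        exact pow_eq_zero_iff (two_ne_zero) |>.mp this
      have := mul_eq_zero.mp h8
      rcases this with h' | h'
      · exact absurd h' hV.ne'
      · have : a i = 0 := by linarith
        simpa using this
    subst ha
    -- from hB : Q = 0
    have hI2 : ∀ i, (∫ x in Ω, curl3 (ckField 0 b ρ Q) x i)
        = V * (![Q 2 1 - Q 1 2, Q 0 2 - Q 2 0, Q 1 0 - Q 0 1] i) := by
      intro i
      have : ∀ x : Fin 3 → ℝ, curl3 (ckField 0 b ρ Q) x i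
          = ![Q 2 1 - Q 1 2, Q 0 2 - Q 2 0, Q 1 0 - Q 0 1] i := by
        intro x
        rw [curl3_ck]
        fin_cases i <;> simp
      simp only [this]
      rw [setIntegral_const, smul_eq_mul]
      rfl
    have hsum2 : (∑ i, (∫ x in Ω, curl3 (ckField 0 b ρ Q) x i) ^ 2) = 0 := by
      have hle := Real.sqrt_eq_zero'.mp hB
      have hge : (0:ℝ) ≤ ∑ i, (∫ x in Ω, curl3 (ckField 0 b ρ Q) x i) ^ 2 :=
        Finset.sum_nonneg fun _ _ => sq_nonneg _
      linarith
    have hQcomp : ∀ i, (![Q 2 1 - Q 1 2, Q 0 2 - Q 2 0, Q 1 0 - Q 0 1] i : ℝ) = 0 := by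
      intro i
      have := (Finset.sum_eq_zero_iff_of_nonneg
        (fun j _ => sq_nonneg (∫ x in Ω, curl3 (ckField 0 b ρ Q) x j))).mp hsum2 i
        (Finset.mem_univ i)
      rw [hI2 i] at this
      have h8 := pow_eq_zero_iff (two_ne_zero) |>.mp this
      rcases mul_eq_zero.mp h8 with h' | h'
      · exact absurd h' hV.ne'
      · exact h'
    have hQ0 : Q = 0 := by
      have e0 := hQcomp 0
      have e1 := hQcomp 1
      have e2 := hQcomp 2
      simp at e0 e1 e2
      ext i j
      fin_cases i <;> fin_cases j <;>
        simp [Matrix.zero_apply] <;>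
        first
          | exact hd _
          | (first
              | linarith [hskew 0 1, e2]
              | linarith [hskew 0 2, e1]
              | linarith [hskew 1 2, e0])
    -- from hA : ρ = 0
    have hI1 : (∫ x in Ω, divg (ckField 0 b ρ Q) x) = V * (3 * ρ) := by
      have : ∀ x : Fin 3 → ℝ, divg (ckField 0 b ρ Q) x = 3 * ρ := by
        intro x
        rw [divg_ck 0 b ρ Q hd]
        simp [dot3]
      simp only [this]
      rw [setIntegral_const, smul_eq_mul]
      rfl
    rw [hI1, abs_eq_zero] at hA
    have hρ : ρ = 0 := by
      rcases mul_eq_zero.mp hA with h' | h'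
      · exact absurd h' hV.ne'
      · linarith
    refine ⟨rfl, hρ, hQ0, ?_⟩
    intro x
    funext j
    subst hρ; subst hQ0
    simp [ckField, dot3]
  · rintro ⟨ha, hρ, hQ0⟩
    subst ha; subst hρ; subst hQ0
    unfold PsiSemi
    have hdiv : ∀ x : Fin 3 → ℝ, divg (ckField 0 b 0 0) x = 0 := by
      intro x
      rw [divg_ck 0 b 0 0 (fun k => rfl)]
      simp [dot3]
    have hcurl : ∀ (x : Fin 3 → ℝ) (i : Fin 3), curl3 (ckField 0 b 0 0) x i = 0 := by
      intro x i
      rw [curl3_ck]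
      fin_cases i <;> simp
    have hcc : ∀ (x : Fin 3 → ℝ) (i : Fin 3),
        curl3 (curl3 (ckField 0 b 0 0)) x i = 0 := by
      intro x i
      rw [curlcurl_ck]
      simp
    simp [hdiv, hcurl, hcc]
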